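/- arXiv:1402.1572 — 3 statements merged into one kernel-verified Lean document; each statement's English description precedes it below -/
import Mathlib

section
/- Let S ≥ 1 and define SNR = S, INR = S^α, C = S^β with α, β ≥ 0. Then lim_{S→∞} [log(1 + INR + (SNR + C + INR·C + 2√(SNR·INR))/(1 + INR))] / log(1 + S) = max{α, β, 1 − α} for α ≤ 1, β ≤ 1. -/
open Real Filter

private lemma logb2_mono {x y : ℝ} (hx : 0 < x) (hxy : x ≤ y) :
    Real.logb 2 x ≤ Real.logb 2 y :=
  Real.logb_le_logb_of_le one_lt_two hx hxy

private lemma ratio_tendsto_one :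
    Tendsto (fun S : ℝ => Real.logb 2 S / Real.logb 2 (1 + S)) atTop (nhds 1) := by
  have hLtop : Tendsto (fun S : ℝ => Real.logb 2 (1 + S)) atTop atTop := by
    exact (Real.tendsto_logb_atTop one_lt_two).comp
      (tendsto_atTop_add_const_left _ 1 tendsto_id)
  have hInv : Tendsto (fun S : ℝ => (Real.logb 2 (1 + S))⁻¹) atTop (nhds 0) :=
    hLtop.inv_tendsto_atTop
  have hdiff : Tendsto (fun S : ℝ => Real.logb 2 (1 + 1 / S)) atTop (nhds 0) := by
    have h1 : Tendsto (fun S : ℝ => 1 + 1 / S) atTop (nhds 1) := by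
      have := tendsto_inv_atTop_zero (𝕜 := ℝ)
      have h2 := tendsto_const_nhds (x := (1:ℝ)) (f := atTop) |>.add this
      simpa [one_div] using h2
    have hc : ContinuousAt (Real.logb 2) 1 := by
      have : ContinuousAt Real.log 1 := Real.continuousAt_log one_ne_zero
      exact this.div_const _
    have := hc.tendsto.comp h1
    simpa [Function.comp_def] using this
  have key : Tendsto (fun S : ℝ =>
      1 - Real.logb 2 (1 + 1 / S) * (Real.logb 2 (1 + S))⁻¹) atTop (nhds 1) := by
    have := (tendsto_const_nhds (x := (1:ℝ)) (f := atTop)).sub (hdiff.mul hInv)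
    simpa using this
  apply key.congr'
  filter_upwards [eventually_gt_atTop (1 : ℝ)] with S hS1
  have hS0 : 0 < S := by linarith
  have hL : 0 < Real.logb 2 (1 + S) := Real.logb_pos one_lt_two (by linarith)
  have h1 : (1 + 1 / S) = (1 + S) / S := by field_simp; ring
  rw [h1, Real.logb_div (by linarith) hS0.ne']
  field_simp; ring

/-- gDoF prelog of the third term of the Gaussian `R₁ + 2R₂` outer bound:
with `SNR = S`, `INR = S^α`, `C = S^β` and `0 ≤ α ≤ 1`, `0 ≤ β ≤ 1`,
`lim_{S→∞} log(1 + INR + (SNR + C + INR·C + 2√(SNR·INR))/(1 + INR)) / log(1 + S)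
  = max{α, β, 1−α}`. -/
theorem gdof_third_term_r1_two_r2 (α β : ℝ) (hα0 : 0 ≤ α) (hα1 : α ≤ 1)
    (hβ0 : 0 ≤ β) (hβ1 : β ≤ 1) :
    Tendsto (fun S : ℝ =>
        Real.logb 2 (1 + S ^ α +
          (S + S ^ β + S ^ α * S ^ β + 2 * Real.sqrt (S * S ^ α)) / (1 + S ^ α))
          / Real.logb 2 (1 + S))
      atTop (nhds (max α (max β (1 - α)))) := by
  set m := max α (max β (1 - α)) with hm
  have hmα : α ≤ m := le_max_left _ _
  have hmβ : β ≤ m := le_trans (le_max_left _ _) (le_max_right _ _)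
  have hm1α : 1 - α ≤ m := le_trans (le_max_right _ _) (le_max_right _ _)
  have hm0 : 0 ≤ m := le_trans hα0 hmα
  have hLtop : Tendsto (fun S : ℝ => Real.logb 2 (1 + S)) atTop atTop :=
    (Real.tendsto_logb_atTop one_lt_two).comp
      (tendsto_atTop_add_const_left _ 1 tendsto_id)
  have hInv : Tendsto (fun S : ℝ => (Real.logb 2 (1 + S))⁻¹) atTop (nhds 0) :=
    hLtop.inv_tendsto_atTop
  have hlow_t : Tendsto (fun S : ℝ =>
      (m * Real.logb 2 S - 1) / Real.logb 2 (1 + S)) atTop (nhds m) := by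
    have h := (ratio_tendsto_one.const_mul m).sub hInv
    simp only [mul_one] at h
    rw [show m - 0 = m from by ring] at h
    apply h.congr
    intro S
    rw [sub_div, mul_div_assoc, one_div]
  have hup_t : Tendsto (fun S : ℝ =>
      (m * Real.logb 2 S + Real.logb 2 7) / Real.logb 2 (1 + S)) atTop (nhds m) := by
    have h := (ratio_tendsto_one.const_mul m).add (hInv.const_mul (Real.logb 2 7))
    simp only [mul_one, mul_zero] at h
    rw [show m + 0 = m from by ring] at h
    apply h.congr
    intro S
    rw [add_div, mul_div_assoc]; ring
  refine tendsto_of_tendsto_of_tendsto_of_le_of_le' hlow_t hup_t ?_ ?_ <;>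
    · filter_upwards [eventually_gt_atTop (1 : ℝ)] with S hS1
      have hS0 : 0 < S := by linarith
      have hApos : 0 < S ^ α := Real.rpow_pos_of_pos hS0 α
      have hA1 : 1 ≤ S ^ α := Real.one_le_rpow hS1.le hα0
      have hBpos : 0 < S ^ β := Real.rpow_pos_of_pos hS0 β
      have hL : 0 < Real.logb 2 (1 + S) := Real.logb_pos one_lt_two (by linarith)
      have hMpos : 0 < S ^ m := Real.rpow_pos_of_pos hS0 m
      have hM1 : 1 ≤ S ^ m := Real.one_le_rpow hS1.le hm0
      have hsq : Real.sqrt (S * S ^ α) = S ^ ((1 + α) / 2) := by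
        rw [show S * S ^ α = S ^ (1 + α) from by
          rw [Real.rpow_add hS0, Real.rpow_one],
          Real.sqrt_eq_rpow, ← Real.rpow_mul hS0.le]
        congr 1; ring
      set N : ℝ := S + S ^ β + S ^ α * S ^ β + 2 * Real.sqrt (S * S ^ α) with hN
      have hNpos : 0 < N := by positivity
      set E : ℝ := 1 + S ^ α + N / (1 + S ^ α) with hE
      have hEpos : 0 < E := by positivity
      have hden : 1 + S ^ α ≤ 2 * S ^ α := by linarith
      -- lower bound : S ^ m / 2 ≤ E
      have hlowE : S ^ m / 2 ≤ E := by
        have hND : 0 ≤ N / (1 + S ^ α) := by positivity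
        rcases max_choice α (max β (1 - α)) with hc | hc
        · rw [hm, hc]; linarith
        · have hstep : ∀ γ : ℝ, S ^ γ * S ^ α ≤ N → S ^ γ / 2 ≤ E := by
            intro γ hγ
            have h1 : S ^ γ * S ^ α / (2 * S ^ α) ≤ N / (1 + S ^ α) :=
              div_le_div₀ hNpos.le hγ (by linarith) hden
            have h2 : S ^ γ * S ^ α / (2 * S ^ α) = S ^ γ / 2 := by
              field_simp
            rw [h2] at h1
            have : (0:ℝ) ≤ 1 + S ^ α := by linarith
            linarith
          rcases max_choice β (1 - α) with hc' | hc'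
          · rw [hm, hc, hc']
            refine hstep β ?_
            have hsqnn : 0 ≤ Real.sqrt (S * S ^ α) := Real.sqrt_nonneg _
            rw [hN, mul_comm (S ^ β) (S ^ α)]; linarith
          · rw [hm, hc, hc']
            refine hstep (1 - α) ?_
            have h3 : S ^ (1 - α) * S ^ α = S := by
              rw [← Real.rpow_add hS0]; norm_num
            have hsqnn : 0 ≤ Real.sqrt (S * S ^ α) := Real.sqrt_nonneg _
            have hAB : 0 < S ^ α * S ^ β := mul_pos hApos hBpos
            rw [hN, h3]; linarith
      -- upper bound : E ≤ 7 * S ^ m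
      have hupE : E ≤ 7 * S ^ m := by
        have hAm : S ^ α ≤ S ^ m := Real.rpow_le_rpow_of_exponent_le hS1.le hmα
        have hNle : N ≤ 5 * (S ^ m * S ^ α) := by
          have hma : S ^ m * S ^ α = S ^ (m + α) := (Real.rpow_add hS0 m α).symm
          have h1 : S ≤ S ^ (m + α) := by
            nth_rewrite 1 [← Real.rpow_one S]
            exact Real.rpow_le_rpow_of_exponent_le hS1.le (by linarith)
          have h2 : S ^ β ≤ S ^ (m + α) :=
            Real.rpow_le_rpow_of_exponent_le hS1.le (by linarith)
          have h3 : S ^ α * S ^ β ≤ S ^ (m + α) := by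
            rw [← Real.rpow_add hS0]
            exact Real.rpow_le_rpow_of_exponent_le hS1.le (by linarith)
          have h4 : Real.sqrt (S * S ^ α) ≤ S ^ (m + α) := by
            rw [hsq]
            exact Real.rpow_le_rpow_of_exponent_le hS1.le (by linarith)
          rw [hN, hma]; linarith
        have hND : N / (1 + S ^ α) ≤ 5 * S ^ m := by
          have h1 : N / (1 + S ^ α) ≤ 5 * (S ^ m * S ^ α) / S ^ α :=
            div_le_div₀ (by positivity) hNle hApos (by linarith)
          have h2 : 5 * (S ^ m * S ^ α) / S ^ α = 5 * S ^ m := by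
            field_simp
          linarith [h1, h2.symm.le, h2.le]
        rw [hE]; linarith
      -- translate into logb bounds
      have hlogl : m * Real.logb 2 S - 1 ≤ Real.logb 2 E := by
        have h := logb2_mono (by positivity : (0:ℝ) < S ^ m / 2) hlowE
        have he : Real.logb 2 (S ^ m / 2) = m * Real.logb 2 S - 1 := by
          rw [Real.logb_div hMpos.ne' two_ne_zero,
            Real.logb_rpow_eq_mul_logb_of_pos hS0, Real.logb_self_eq_one] <;> norm_num
        linarith [he ▸ h]
      have hlogu : Real.logb 2 E ≤ m * Real.logb 2 S + Real.logb 2 7 := by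
        have h := logb2_mono hEpos hupE
        have he : Real.logb 2 (7 * S ^ m) = m * Real.logb 2 S + Real.logb 2 7 := by
          rw [Real.logb_mul (by norm_num) hMpos.ne',
            Real.logb_rpow_eq_mul_logb_of_pos hS0]
          ring
        linarith [he ▸ h]
      first
      | exact (div_le_div_iff_of_pos_right hL).mpr hlogl
      | exact (div_le_div_iff_of_pos_right hL).mpr hlogu
end

section
/- Let S ≥ 1, α, β ∈ [0,1]. Then lim_{S→∞} [log(1 + (√S + √(S^α))²) + log(1 + S^β) + log 2 + log(1 + S/(1 + S^α + S^β)) + log(1 + S^α/S^β + S/S^α)] / log(1+S) = 1 + [1 − max{α,β}]⁺ + max{α, 1 − α + β}. -/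
open Real Filter

private lemma logL_atTop : Tendsto (fun S : ℝ => Real.log (1 + S)) atTop atTop :=
  Real.tendsto_log_atTop.comp (tendsto_atTop_add_const_left _ 1 tendsto_id)

private lemma log_shift : Tendsto (fun S : ℝ => Real.log S / Real.log (1 + S)) atTop (nhds 1) := by
  have h0 : Tendsto (fun S : ℝ => Real.log 2 / Real.log S) atTop (nhds 0) :=
    tendsto_const_nhds.div_atTop Real.tendsto_log_atTop
  have h1 : Tendsto (fun S : ℝ => Real.log S / (Real.log 2 + Real.log S)) atTop (nhds 1) := by
    have h3 : Tendsto (fun S : ℝ => 1 + Real.log 2 / Real.log S) atTop (nhds (1 + 0)) :=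
      tendsto_const_nhds.add h0
    have h2 : Tendsto (fun S : ℝ => (1 + Real.log 2 / Real.log S)⁻¹) atTop (nhds 1) := by
      simpa using h3.inv₀ (by norm_num)
    apply h2.congr'
    filter_upwards [eventually_gt_atTop (1 : ℝ)] with S hS
    have hlS : (0:ℝ) < Real.log S := Real.log_pos hS
    rw [inv_eq_one_div, div_eq_div_iff (by positivity) (by positivity)]
    field_simp
    ring
  apply tendsto_of_tendsto_of_tendsto_of_le_of_le' h1 tendsto_const_nhds
  · filter_upwards [eventually_ge_atTop (2 : ℝ)] with S hS
    have hS1 : (1:ℝ) < S := by linarith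
    have hlS : (0:ℝ) < Real.log S := Real.log_pos hS1
    have hL : Real.log (1 + S) ≤ Real.log 2 + Real.log S := by
      rw [← Real.log_mul (by norm_num) (by positivity)]
      exact Real.log_le_log (by linarith) (by linarith)
    have hLpos : (0:ℝ) < Real.log (1 + S) := Real.log_pos (by linarith)
    exact div_le_div_of_nonneg_left hlS.le hLpos hL
  · filter_upwards [eventually_ge_atTop (2 : ℝ)] with S hS
    have hS1 : (1:ℝ) < S := by linarith
    have hlS : (0:ℝ) < Real.log S := Real.log_pos hS1
    have hL : Real.log S ≤ Real.log (1 + S) := Real.log_le_log (by linarith) (by linarith)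
    have hLpos : (0:ℝ) < Real.log (1 + S) := Real.log_pos (by linarith)
    calc Real.log S / Real.log (1 + S) ≤ Real.log (1+S) / Real.log (1+S) := by gcongr
      _ = 1 := div_self hLpos.ne'

private lemma key (f : ℝ → ℝ) (e c1 c2 : ℝ) (hc1 : 0 < c1) (hc2 : 0 < c2)
    (hb : ∀ᶠ S in atTop, c1 * S ^ e ≤ f S ∧ f S ≤ c2 * S ^ e) :
    Tendsto (fun S : ℝ => Real.log (f S) / Real.log (1 + S)) atTop (nhds e) := by
  have haux : ∀ c : ℝ, 0 < c → Tendsto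
      (fun S : ℝ => (Real.log c + e * Real.log S) / Real.log (1 + S)) atTop (nhds e) := by
    intro c hc
    have h1 : Tendsto (fun S : ℝ => Real.log c / Real.log (1 + S)
        + e * (Real.log S / Real.log (1 + S))) atTop (nhds (0 + e * 1)) :=
      (tendsto_const_nhds.div_atTop logL_atTop).add (tendsto_const_nhds.mul log_shift)
    rw [show (0 : ℝ) + e * 1 = e by ring] at h1
    apply h1.congr
    intro S
    rw [add_div, mul_div_assoc]
  apply tendsto_of_tendsto_of_tendsto_of_le_of_le' (haux c1 hc1) (haux c2 hc2)
  · filter_upwards [eventually_ge_atTop (2 : ℝ), hb] with S hS hbS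
    have hSpos : (0:ℝ) < S := by linarith
    have hLpos : (0:ℝ) < Real.log (1 + S) := Real.log_pos (by linarith)
    have h1 : Real.log c1 + e * Real.log S = Real.log (c1 * S ^ e) := by
      rw [Real.log_mul hc1.ne' (by positivity), Real.log_rpow hSpos]
    rw [h1]
    have h2 : Real.log (c1 * S ^ e) ≤ Real.log (f S) :=
      Real.log_le_log (by positivity) hbS.1
    gcongr
  · filter_upwards [eventually_ge_atTop (2 : ℝ), hb] with S hS hbS
    have hSpos : (0:ℝ) < S := by linarith
    have hLpos : (0:ℝ) < Real.log (1 + S) := Real.log_pos (by linarith)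
    have h1 : Real.log c2 + e * Real.log S = Real.log (c2 * S ^ e) := by
      rw [Real.log_mul hc2.ne' (by positivity), Real.log_rpow hSpos]
    rw [h1]
    have hfpos : 0 < f S := lt_of_lt_of_le (by positivity) hbS.1
    have h2 : Real.log (f S) ≤ Real.log (c2 * S ^ e) := Real.log_le_log hfpos hbS.2
    gcongr

private lemma logb_ratio (x y : ℝ) :
    Real.logb 2 x / Real.logb 2 y = Real.log x / Real.log y := by
  rcases eq_or_ne (Real.log y) 0 with h | h
  · simp [Real.logb, h]
  · rw [Real.logb, Real.logb]; field_simp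

/-- gDoF prelog of the Gaussian `2R₁ + R₂` outer bound in the symmetric setting
`SNR = S`, `INR = S^α`, `C = S^β`:
`lim_{S→∞} [log(1+(√S+√(S^α))²) + log(1+S^β) + log 2 + log(1+S/(1+S^α+S^β))
  + log(1+S^α/S^β+S/S^α)] / log(1+S) = 1 + [1 − max{α,β}]⁺ + max{α, 1−α+β}`. -/
theorem gdof_two_r1_r2 (α β : ℝ) (hα0 : 0 ≤ α) (hα1 : α ≤ 1) (hβ0 : 0 ≤ β) (hβ1 : β ≤ 1) :
    Tendsto (fun S : ℝ =>
        (Real.logb 2 (1 + (Real.sqrt S + Real.sqrt (S ^ α)) ^ 2)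
          + Real.logb 2 (1 + S ^ β) + Real.logb 2 2
          + Real.logb 2 (1 + S / (1 + S ^ α + S ^ β))
          + Real.logb 2 (1 + S ^ α / S ^ β + S / S ^ α))
          / Real.logb 2 (1 + S))
      atTop (nhds (1 + max 0 (1 - max α β) + max α (1 - α + β))) := by
  set m := max α β with hm
  have hm1 : m ≤ 1 := max_le hα1 hβ1
  have hm0 : 0 ≤ m := le_trans hα0 (le_max_left _ _)
  set e5 := max (α - β) (1 - α) with he5
  have he50 : 0 ≤ e5 := by
    rcases le_total α β with h | h
    · exact le_trans (by linarith) (le_max_right _ _)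
    · exact le_trans (by linarith) (le_max_left _ _)
  have T1 : Tendsto (fun S : ℝ =>
      Real.log (1 + (Real.sqrt S + Real.sqrt (S ^ α)) ^ 2) / Real.log (1 + S))
      atTop (nhds 1) := by
    apply key _ 1 1 5 one_pos (by norm_num)
    filter_upwards [eventually_ge_atTop (1 : ℝ)] with S hS
    have hSpos : (0:ℝ) < S := by linarith
    have hsa : Real.sqrt (S ^ α) ≤ Real.sqrt S := by
      apply Real.sqrt_le_sqrt
      calc S ^ α ≤ S ^ (1:ℝ) := Real.rpow_le_rpow_of_exponent_le hS hα1
        _ = S := Real.rpow_one S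
    have hq1 : Real.sqrt S ^ 2 = S := Real.sq_sqrt hSpos.le
    have hq2 : Real.sqrt (S ^ α) ^ 2 = S ^ α := Real.sq_sqrt (by positivity)
    rw [one_mul, Real.rpow_one]
    constructor
    · nlinarith [Real.sqrt_nonneg S, Real.sqrt_nonneg (S ^ α)]
    · nlinarith [Real.sqrt_nonneg S, Real.sqrt_nonneg (S ^ α), hsa]
  have T2 : Tendsto (fun S : ℝ => Real.log (1 + S ^ β) / Real.log (1 + S)) atTop (nhds β) := by
    apply key _ β 1 2 one_pos (by norm_num)
    filter_upwards [eventually_ge_atTop (1 : ℝ)] with S hS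
    have h1 : (1:ℝ) ≤ S ^ β := Real.one_le_rpow hS hβ0
    constructor <;> nlinarith
  have T3 : Tendsto (fun S : ℝ => Real.log 2 / Real.log (1 + S)) atTop (nhds 0) := by
    apply key _ 0 2 2 (by norm_num) (by norm_num)
    filter_upwards [eventually_ge_atTop (1 : ℝ)] with S hS
    rw [Real.rpow_zero]
    norm_num
  have T4 : Tendsto (fun S : ℝ => Real.log (1 + S / (1 + S ^ α + S ^ β)) / Real.log (1 + S))
      atTop (nhds (1 - m)) := by
    apply key _ (1 - m) (1/3) 2 (by norm_num) (by norm_num)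
    filter_upwards [eventually_ge_atTop (1 : ℝ)] with S hS
    have hSpos : (0:ℝ) < S := by linarith
    have hm' : (1:ℝ) ≤ S ^ m := Real.one_le_rpow hS hm0
    have hα' : S ^ α ≤ S ^ m := Real.rpow_le_rpow_of_exponent_le hS (le_max_left _ _)
    have hβ' : S ^ β ≤ S ^ m := Real.rpow_le_rpow_of_exponent_le hS (le_max_right _ _)
    have hαpos : (0:ℝ) < S ^ α := Real.rpow_pos_of_pos hSpos _
    have hβpos : (0:ℝ) < S ^ β := Real.rpow_pos_of_pos hSpos _
    have hmpos : (0:ℝ) < S ^ m := Real.rpow_pos_of_pos hSpos _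
    have hsub : S ^ (1 - m) = S / S ^ m := by
      rw [Real.rpow_sub hSpos, Real.rpow_one]
    have hd : (0:ℝ) < 1 + S ^ α + S ^ β := by positivity
    have h1m : (1:ℝ) ≤ S ^ (1 - m) := Real.one_le_rpow hS (by linarith)
    have hmax : S ^ m ≤ 1 + S ^ α + S ^ β := by
      rcases max_choice α β with h | h <;> rw [hm, h] <;> linarith
    constructor
    · have h2 : (1/3 : ℝ) * S ^ (1 - m) = S / (3 * S ^ m) := by
        rw [hsub]; field_simp
      have h3 : S / (3 * S ^ m) ≤ S / (1 + S ^ α + S ^ β) :=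
        div_le_div_of_nonneg_left hSpos.le hd (by linarith)
      linarith
    · have h3 : S / (1 + S ^ α + S ^ β) ≤ S / S ^ m :=
        div_le_div_of_nonneg_left hSpos.le hmpos hmax
      rw [← hsub] at h3
      linarith
  have T5 : Tendsto (fun S : ℝ => Real.log (1 + S ^ α / S ^ β + S / S ^ α) / Real.log (1 + S))
      atTop (nhds e5) := by
    apply key _ e5 1 3 one_pos (by norm_num)
    filter_upwards [eventually_ge_atTop (1 : ℝ)] with S hS
    have hSpos : (0:ℝ) < S := by linarith
    have hαβ : S ^ α / S ^ β = S ^ (α - β) := by rw [Real.rpow_sub hSpos]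
    have h1α : S / S ^ α = S ^ (1 - α) := by rw [Real.rpow_sub hSpos, Real.rpow_one]
    rw [hαβ, h1α]
    have h1 : (1:ℝ) ≤ S ^ e5 := Real.one_le_rpow hS he50
    have h2 : S ^ (α - β) ≤ S ^ e5 := Real.rpow_le_rpow_of_exponent_le hS (le_max_left _ _)
    have h3 : S ^ (1 - α) ≤ S ^ e5 := Real.rpow_le_rpow_of_exponent_le hS (le_max_right _ _)
    have h4 : (0:ℝ) < S ^ (α - β) := Real.rpow_pos_of_pos hSpos _
    have h5 : (0:ℝ) < S ^ (1 - α) := Real.rpow_pos_of_pos hSpos _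
    constructor
    · rcases max_choice (α - β) (1 - α) with h | h
      · rw [he5, h]; linarith
      · rw [he5, h]; linarith
    · linarith
  have Tsum : Tendsto (fun S : ℝ =>
      Real.log (1 + (Real.sqrt S + Real.sqrt (S ^ α)) ^ 2) / Real.log (1 + S)
      + Real.log (1 + S ^ β) / Real.log (1 + S)
      + Real.log 2 / Real.log (1 + S)
      + Real.log (1 + S / (1 + S ^ α + S ^ β)) / Real.log (1 + S)
      + Real.log (1 + S ^ α / S ^ β + S / S ^ α) / Real.log (1 + S))
      atTop (nhds (1 + β + 0 + (1 - m) + e5)) :=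
    (((T1.add T2).add T3).add T4).add T5
  have heq : 1 + β + 0 + (1 - m) + e5 = 1 + max 0 (1 - max α β) + max α (1 - α + β) := by
    have h1 : max 0 (1 - max α β) = 1 - m := max_eq_right (by rw [← hm]; linarith)
    have h2 : max α (1 - α + β) = β + e5 := by
      rw [he5, ← max_add_add_left]
      congr 1 <;> ring
    rw [h1, h2]; ring
  rw [heq] at Tsum
  apply Tsum.congr
  intro S
  simp only [add_div, logb_ratio]
end

section
/- For 0 ≤ α < 1 and 0 ≤ β ≤ [2α − 1]⁺ (in particular β ≤ 2α − 1 when α ≥ 1/2, and β = 0 when α < 1/2), the polytope in (d₁, d₂) ∈ ℝ²≥0 defined by d₁ ≤ 1, d₂ ≤ 1, d₁+d₂ ≤ 2−α, d₁+d₂ ≤ max{α,1−α} + max{α, 1+β−α}, 2d₁+d₂ ≤ 1 + [1−max{α,β}]⁺ + max{α, 1−α+β}, d₁+2d₂ ≤ 2−α+max{α,β,1−α} equals the polytope defined by d₁ ≤ 1, d₂ ≤ 1, d₁+d₂ ≤ 2−α, d₁+d₂ ≤ 2·max{α,1−α}, 2d₁+d₂ ≤ 2−α+max{α,1−α}, d₁+2d₂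 ≤ 2−α+max{α,1−α} (the gDoF region of the classical non-cooperative interference channel). -/
open Real

/-- For weak cooperation `β ≤ [2α−1]⁺` (and `0 ≤ α < 1`, `0 ≤ β`), the cooperative gDoF
outer-bound polytope coincides with the gDoF region of the classical non-cooperative IC. -/
theorem gdof_region_eq_noncooperative (α β : ℝ)
    (hα0 : 0 ≤ α) (hα1 : α < 1) (hβ0 : 0 ≤ β) (hβ : β ≤ max 0 (2 * α - 1)) :
    {d : ℝ × ℝ | 0 ≤ d.1 ∧ 0 ≤ d.2 ∧
      d.1 ≤ 1 ∧ d.2 ≤ 1 ∧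
      d.1 + d.2 ≤ 2 - α ∧
      d.1 + d.2 ≤ max α (1 - α) + max α (1 + β - α) ∧
      2 * d.1 + d.2 ≤ 1 + max 0 (1 - max α β) + max α (1 - α + β) ∧
      d.1 + 2 * d.2 ≤ 2 - α + max α (max β (1 - α))}
    = {d : ℝ × ℝ | 0 ≤ d.1 ∧ 0 ≤ d.2 ∧
      d.1 ≤ 1 ∧ d.2 ≤ 1 ∧
      d.1 + d.2 ≤ 2 - α ∧
      d.1 + d.2 ≤ 2 * max α (1 - α) ∧
      2 * d.1 + d.2 ≤ 2 - α + max α (1 - α) ∧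
      d.1 + 2 * d.2 ≤ 2 - α + max α (1 - α)} := by
  have key : max α (1 + β - α) = max α (1 - α) ∧
      max 0 (1 - max α β) = 1 - α ∧
      max α (1 - α + β) = max α (1 - α) ∧
      max α (max β (1 - α)) = max α (1 - α) := by
    rcases le_or_gt α (1 / 2) with h | h
    · have hb : β = 0 := le_antisymm (hβ.trans (by rw [max_eq_left (by linarith)])) hβ0
      subst hb
      have h1 : max α (0 : ℝ) = α := max_eq_left hα0
      have h2 : max (0 : ℝ) (1 - α) = 1 - α := max_eq_right (by linarith)
      refine ⟨by norm_num, by rw [h1]; exact max_eq_right (by linarith), by norm_num,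
        by rw [h2]⟩
    · have hb : β ≤ 2 * α - 1 := by
        have := hβ; rwa [max_eq_right (by linarith : (0:ℝ) ≤ 2 * α - 1)] at this
      have hma : max α (1 - α) = α := max_eq_left (by linarith)
      refine ⟨?_, ?_, ?_, ?_⟩
      · rw [max_eq_left (by linarith : 1 + β - α ≤ α), hma]
      · rw [max_eq_left (by linarith : β ≤ α), max_eq_right (by linarith : (0:ℝ) ≤ 1 - α)]
      · rw [max_eq_left (by linarith : 1 - α + β ≤ α), hma]
      · rw [max_eq_left (max_le (by linarith) (by linarith)), hma]
  obtain ⟨e1, e2, e3, e4⟩ := key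
  ext d
  simp only [Set.mem_setOf_eq, e1, e2, e3, e4]
  constructor <;> rintro ⟨a, b, c, d', e, f, g, h⟩ <;>
    exact ⟨a, b, c, d', e, by linarith, by linarith, h⟩
end
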